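/- Let A and B be unital *-algebras over ℂ, ω a positive linear functional on A, and σ a positive linear functional on B. Then the product functional ω ⊗ σ is positive on A ⊗ B: for every x ∈ A ⊗ B, (ω ⊗ σ)(star x * x) is a nonnegative real number. -/

import Mathlib

open scoped TensorProduct

noncomputable section

/-- A linear functional on a unital *-algebra over ℂ is *positive* if it takes
nonnegative real values on elements of the form `star x * x`. -/
def IsPositiveLF {A : Type} [Ring A] [Algebra ℂ A] [StarRing A] (φ : A →ₗ[ℂ] ℂ) : Prop :=
  ∀ x : A, ∃ r : ℝ, 0 ≤ r ∧ φ (star x * x) = (r : ℂ)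

/-- A *state* on a unital *-algebra over ℂ: a positive, normalised linear functional
compatible with the star operation. -/
def IsState {A : Type} [Ring A] [Algebra ℂ A] [StarRing A] (φ : A →ₗ[ℂ] ℂ) : Prop :=
  IsPositiveLF φ ∧ φ 1 = 1 ∧ ∀ x : A, φ (star x) = starRingEnd ℂ (φ x)

/-- An element of a *-algebra is a *sum of squares* if it is a finite sum of
elements of the form `star c * c`. -/
def IsSumOfStarSquares {A : Type} [Ring A] [StarRing A] (a : A) : Prop :=
  ∃ (n : ℕ) (c : Fin n → A), a = ∑ i, star (c i) * c i

/-- The product functional `ω ⊗ σ`, determined by `(ω ⊗ σ)(a ⊗ b) = ω(a) * σ(b)`. -/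
def prodLF {A B : Type} [AddCommGroup A] [Module ℂ A] [AddCommGroup B] [Module ℂ B]
    (ω : A →ₗ[ℂ] ℂ) (σ : B →ₗ[ℂ] ℂ) : A ⊗[ℂ] B →ₗ[ℂ] ℂ :=
  (TensorProduct.lid ℂ ℂ).toLinearMap ∘ₗ TensorProduct.map ω σ

lemma prodLF_tmul {A B : Type} [AddCommGroup A] [Module ℂ A] [AddCommGroup B] [Module ℂ B]
    (ω : A →ₗ[ℂ] ℂ) (σ : B →ₗ[ℂ] ℂ) (a : A) (b : B) :
    prodLF ω σ (a ⊗ₜ[ℂ] b) = ω a * σ b := by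
  simp [prodLF, smul_eq_mul, mul_comm]

/-- The slice map `η_σ : A ⊗ B → A`, determined by `η_σ(a ⊗ b) = σ(b) • a`. -/
def sliceLF {A B : Type} [AddCommGroup A] [Module ℂ A] [AddCommGroup B] [Module ℂ B]
    (σ : B →ₗ[ℂ] ℂ) : A ⊗[ℂ] B →ₗ[ℂ] A :=
  (TensorProduct.rid ℂ A).toLinearMap ∘ₗ TensorProduct.map LinearMap.id σ

lemma sliceLF_tmul {A B : Type} [AddCommGroup A] [Module ℂ A] [AddCommGroup B] [Module ℂ B]
    (σ : B →ₗ[ℂ] ℂ) (a : A) (b : B) : sliceLF σ (a ⊗ₜ[ℂ] b) = σ b • a := by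
  simp [sliceLF]

/-- The star operation on the algebraic tensor product `A ⊗[ℂ] B`, determined by
`star (a ⊗ b) = star a ⊗ star b` (it is additive). -/
def tensorStar {A B : Type} [AddCommGroup A] [Module ℂ A] [StarAddMonoid A] [StarModule ℂ A]
    [AddCommGroup B] [Module ℂ B] [StarAddMonoid B] [StarModule ℂ B] :
    A ⊗[ℂ] B →+ A ⊗[ℂ] B :=
  TensorProduct.liftAddHom
    { toFun := fun a =>
        { toFun := fun b => star a ⊗ₜ[ℂ] star b
          map_zero' := by simp
          map_add' := fun b b' => by simp [star_add, TensorProduct.tmul_add] }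
      map_zero' := by ext b; simp
      map_add' := fun a a' => by ext b; simp [star_add, TensorProduct.add_tmul] }
    (fun c a b => by
      simp only [AddMonoidHom.coe_mk, ZeroHom.coe_mk, star_smul, starRingEnd_apply,
        TensorProduct.smul_tmul, TensorProduct.smul_tmul'])

@[simp] lemma tensorStar_tmul {A B : Type} [AddCommGroup A] [Module ℂ A] [StarAddMonoid A]
    [StarModule ℂ A] [AddCommGroup B] [Module ℂ B] [StarAddMonoid B] [StarModule ℂ B]
    (a : A) (b : B) : tensorStar (a ⊗ₜ[ℂ] b) = star a ⊗ₜ[ℂ] star b := rfl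

/-- The pre-instrument `ℐ_σ(B̂)` associated to a coupling map `Θ`: it sends the
functional `ω` to the functional `a ↦ (ω ⊗ σ)(Θ(a ⊗ B̂))`. -/
def preInstrument {A B : Type} [Ring A] [Algebra ℂ A] [Ring B] [Algebra ℂ B]
    (Θ : A ⊗[ℂ] B →ₗ[ℂ] A ⊗[ℂ] B) (σ : B →ₗ[ℂ] ℂ) (Bhat : B)
    (ω : A →ₗ[ℂ] ℂ) : A →ₗ[ℂ] ℂ :=
  prodLF ω σ ∘ₗ Θ ∘ₗ (TensorProduct.mk ℂ A B).flip Bhat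

section Aux
open scoped ComplexOrder
open Matrix

variable {A : Type} [Ring A] [Algebra ℂ A] [StarRing A] [StarModule ℂ A]

lemma IsPositiveLF.star_mul_conj {φ : A →ₗ[ℂ] ℂ} (hφ : IsPositiveLF φ) (x y : A) :
    φ (star y * x) = starRingEnd ℂ (φ (star x * y)) := by
  obtain ⟨r1, _, hr1⟩ := hφ x
  obtain ⟨r2, _, hr2⟩ := hφ y
  obtain ⟨s, _, hs⟩ := hφ (x + y)
  obtain ⟨t, _, ht⟩ := hφ (x + Complex.I • y)
  set a := φ (star x * y) with ha
  set b := φ (star y * x) with hb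
  have exp1 : star (x + y) * (x + y)
      = star x * x + star x * y + star y * x + star y * y := by
    rw [star_add]; noncomm_ring
  have e1 : (r1 : ℂ) + a + b + r2 = s := by
    rw [← hr1, ← hr2, ← hs, exp1, ha, hb]
    simp [map_add]
  have hstI : star (x + Complex.I • y) = star x + (-Complex.I) • star y := by
    rw [star_add, star_smul]
    norm_num [Complex.star_def, Complex.conj_I]
  have exp2 : star (x + Complex.I • y) * (x + Complex.I • y)
      = star x * x + star y * y + Complex.I • (star x * y)
        + (-Complex.I) • (star y * x) := by
    rw [hstI, add_mul, mul_add, mul_add, mul_smul_comm, smul_mul_assoc, smul_mul_assoc,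
      mul_smul_comm, smul_smul]
    have hII : (-Complex.I) * Complex.I = 1 := by
      rw [neg_mul, Complex.I_mul_I, neg_neg]
    rw [hII, one_smul]
    abel
  have e2 : (r1 : ℂ) + r2 + Complex.I * a + (-Complex.I) * b = t := by
    rw [← hr1, ← hr2, ← ht, exp2, ha, hb]
    simp only [map_add, _root_.map_smul, smul_eq_mul, neg_mul]
  have hc1 : starRingEnd ℂ (a + b) = a + b := by
    have : a + b = ((s - r1 - r2 : ℝ) : ℂ) := by push_cast; linear_combination e1
    rw [this]; simp
  have hc2 : starRingEnd ℂ (a - b) = -(a - b) := by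
    have : a - b = -Complex.I * ((t - r1 - r2 : ℝ) : ℂ) := by
      push_cast
      have hI : Complex.I * Complex.I = -1 := Complex.I_mul_I
      linear_combination -Complex.I * e2 + (a - b) * hI
    rw [this]
    simp [_root_.map_mul, Complex.ext_iff]
  have h1 : starRingEnd ℂ a + starRingEnd ℂ b = a + b := by rw [← map_add]; exact hc1
  have h2 : starRingEnd ℂ a - starRingEnd ℂ b = -(a - b) := by rw [← map_sub]; exact hc2
  linear_combination (-h1 - h2) / 2

lemma IsPositiveLF.posSemidef {φ : A →ₗ[ℂ] ℂ} (hφ : IsPositiveLF φ) {n : Type} [Fintype n]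
    (c : n → A) : Matrix.PosSemidef (Matrix.of fun i j => φ (star (c i) * c j)) := by
  rw [Matrix.posSemidef_iff_dotProduct_mulVec]
  constructor
  · ext i j
    simp only [Matrix.conjTranspose_apply, Matrix.of_apply]
    rw [hφ.star_mul_conj (c j) (c i)]
    rfl
  · intro v
    set y := ∑ j, v j • c j with hy
    have key : star y * y = ∑ i, ∑ j, (starRingEnd ℂ (v i) * v j) • (star (c i) * c j) := by
      rw [hy, star_sum, Finset.sum_mul]
      refine Finset.sum_congr rfl fun i _ => ?_
      rw [Finset.mul_sum]
      refine Finset.sum_congr rfl fun j _ => ?_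
      rw [star_smul, smul_mul_assoc, mul_smul_comm, smul_smul]
      rfl
    have hdot : dotProduct (star v) ((Matrix.of fun i j => φ (star (c i) * c j)) *ᵥ v)
        = φ (star y * y) := by
      rw [key, map_sum]
      simp only [dotProduct, Matrix.mulVec, Matrix.of_apply, Pi.star_apply,
        map_sum, _root_.map_smul, smul_eq_mul]
      refine Finset.sum_congr rfl fun i _ => ?_
      rw [Finset.mul_sum]
      refine Finset.sum_congr rfl fun j _ => ?_
      simp [dotProduct]
      ring
    rw [hdot]
    obtain ⟨r, hr0, hr⟩ := hφ y
    rw [hr]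
    exact_mod_cast Complex.zero_le_real.mpr hr0

lemma sum_mul_posSemidef {n : Type} [Fintype n] [DecidableEq n] {M N : Matrix n n ℂ}
    (hM : M.PosSemidef) (hN : N.PosSemidef) :
    ∃ r : ℝ, 0 ≤ r ∧ ∑ i, ∑ j, M i j * N i j = (r : ℂ) := by
  obtain ⟨C, hC⟩ : ∃ C : Matrix n n ℂ, M = C.conjTranspose * C := by
    open scoped MatrixOrder in exact CStarAlgebra.nonneg_iff_eq_star_mul_self.mp hM.nonneg
  have hnn : (0 : ℂ) ≤ ∑ i, ∑ j, M i j * N i j := by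
    have : ∑ i, ∑ j, M i j * N i j
        = ∑ k, dotProduct (star fun i => C k i) (N *ᵥ fun j => C k j) := by
      calc ∑ i, ∑ j, M i j * N i j
          = ∑ i, ∑ j, ∑ k, star (C k i) * (N i j * C k j) := by
            refine Finset.sum_congr rfl fun i _ => Finset.sum_congr rfl fun j _ => ?_
            rw [hC]
            simp only [Matrix.mul_apply, Matrix.conjTranspose_apply, Finset.sum_mul]
            exact Finset.sum_congr rfl fun k _ => by ring
        _ = ∑ i, ∑ k, ∑ j, star (C k i) * (N i j * C k j) :=
            Finset.sum_congr rfl fun i _ => Finset.sum_comm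
        _ = ∑ k, ∑ i, ∑ j, star (C k i) * (N i j * C k j) := Finset.sum_comm
        _ = ∑ k, dotProduct (star fun i => C k i) (N *ᵥ fun j => C k j) := by
            refine Finset.sum_congr rfl fun k _ => ?_
            simp only [dotProduct, Matrix.mulVec, Pi.star_apply, Finset.mul_sum]
    rw [this]
    exact Finset.sum_nonneg fun k _ => hN.dotProduct_mulVec_nonneg _
  refine ⟨(∑ i, ∑ j, M i j * N i j).re, ?_, ?_⟩
  · have := hnn
    rw [Complex.le_def] at this
    simpa using this.1
  · rw [Complex.le_def] at hnn
    apply Complex.ext <;> simp [hnn.2.symm]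

end Aux

variable {A B : Type}
  [Ring A] [Algebra ℂ A] [StarRing A] [StarModule ℂ A]
  [Ring B] [Algebra ℂ B] [StarRing B] [StarModule ℂ B]

/-- the product of positive functionals is positive on `A ⊗ B`:
`(ω ⊗ σ)(star x * x)` is a nonnegative real for every `x ∈ A ⊗ B`. -/
theorem prod_functional_positive
    (ω : A →ₗ[ℂ] ℂ) (hω : IsPositiveLF ω) (σ : B →ₗ[ℂ] ℂ) (hσ : IsPositiveLF σ)
    (x : A ⊗[ℂ] B) :
    ∃ r : ℝ, 0 ≤ r ∧ prodLF ω σ (tensorStar x * x) = (r : ℂ) := by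
  classical
  obtain ⟨S, hS⟩ := TensorProduct.exists_finset x
  set c : S → A := fun p => (p : A × B).1 with hc
  set d : S → B := fun p => (p : A × B).2 with hd
  have hx : x = ∑ p : S, c p ⊗ₜ[ℂ] d p := by
    rw [hS, ← Finset.sum_coe_sort S (fun p => p.1 ⊗ₜ[ℂ] p.2)]
  have key : prodLF ω σ (tensorStar x * x)
      = ∑ i : S, ∑ j : S, ω (star (c i) * c j) * σ (star (d i) * d j) := by
    rw [hx, map_sum]
    simp only [tensorStar_tmul]
    rw [Finset.sum_mul_sum, map_sum]
    refine Finset.sum_congr rfl fun i _ => ?_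
    rw [map_sum]
    refine Finset.sum_congr rfl fun j _ => ?_
    rw [Algebra.TensorProduct.tmul_mul_tmul, prodLF_tmul]
  rw [key]
  obtain ⟨r, hr0, hr⟩ := sum_mul_posSemidef (hω.posSemidef c) (hσ.posSemidef d)
  exact ⟨r, hr0, by rw [← hr]; rfl⟩
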